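/- Let m be a positive integer and let a : Fin m → ℝ be such that a i > 0 for every i and the family (a i)_{i} is linearly independent over ℚ. Define the weighted ℓ¹ norm of v : Fin m → ℤ by ‖v‖_a = Σ_i a i * |v i| (with integer entries cast to ℝ). Then the group of additive (ℤ-linear) bijections f of Fin m → ℤ satisfying ‖f v‖_a = ‖v‖_a for all v is finite of order exactly 2^m, consisting precisely of the maps sending each standard basis vector e_j to ε_j • e_j with ε_j ∈ {1, −1}. -/
import Mathlib

open Finset

private lemma decomp6 {m : ℕ} (f : (Fin m → ℤ) ≃+ (Fin m → ℤ)) (v : Fin m → ℤ) :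
    f v = ∑ j, v j • f (Pi.single j 1) := by
  conv_lhs => rw [← Finset.univ_sum_single v, map_sum]
  refine Finset.sum_congr rfl fun j _ => ?_
  rw [← map_zsmul]
  congr 1
  funext i
  by_cases h : i = j
  · subst h; simp
  · simp [Pi.single_eq_of_ne h]

private lemma eval6 {m : ℕ} (a : Fin m → ℝ) (hli : LinearIndependent ℚ a)
    (f : (Fin m → ℤ) ≃+ (Fin m → ℤ))
    (hf : ∀ v : Fin m → ℤ,
        ∑ i, a i * |((f v) i : ℝ)| = ∑ i, a i * |(v i : ℝ)|) :
    ∃ ε : Fin m → ℤ, (∀ i, ε i = 1 ∨ ε i = -1) ∧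
      ∀ v i, f v i = ε i * v i := by
  have key : ∀ j i, |f (Pi.single j 1) i| = if i = j then 1 else 0 := by
    intro j
    set w := f (Pi.single j 1) with hw
    have h1 : ∑ i, a i * |(w i : ℝ)| = a j := by
      rw [hf (Pi.single j 1)]
      rw [Finset.sum_eq_single j]
      · simp
      · intro i _ hij; simp [Pi.single_eq_of_ne hij]
      · simp
    have h2 : ∀ i, ((|w i| : ℤ) : ℚ) - (if i = j then 1 else 0) = 0 := by
      refine (Fintype.linearIndependent_iff.mp hli)
        (fun i => ((|w i| : ℤ) : ℚ) - (if i = j then 1 else 0)) ?_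
      have e1 : ∑ i, (((|w i| : ℤ) : ℚ) - (if i = j then 1 else 0)) • a i
          = ∑ i, (a i * |(w i : ℝ)| - if i = j then a i else 0) := by
        refine Finset.sum_congr rfl fun i _ => ?_
        rw [Rat.smul_def]
        by_cases h : i = j <;> push_cast [Int.cast_abs, h] <;> simp <;> ring
      rw [e1, Finset.sum_sub_distrib, h1]
      simp
    intro i
    by_cases hij : i = j
    · subst hij
      rw [if_pos rfl]
      have h3 : ((|w i| : ℤ) : ℚ) = 1 := by
        have h4 := h2 i
        simp at h4
        rw [Int.cast_abs]; linarith
      exact_mod_cast h3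
    · rw [if_neg hij]
      have h3 : ((|w i| : ℤ) : ℚ) = 0 := by simpa [hij] using h2 i
      exact_mod_cast h3
  refine ⟨fun i => f (Pi.single i 1) i, ?_, ?_⟩
  · intro i
    have h4 := key i i
    rw [if_pos rfl] at h4
    exact (abs_eq (by norm_num : (0:ℤ) ≤ 1)).mp h4
  · intro v i
    rw [decomp6 f v]
    simp only [Finset.sum_apply, Pi.smul_apply, smul_eq_mul]
    rw [Finset.sum_eq_single i]
    · ring
    · intro j _ hji
      have h0 : f (Pi.single j 1) i = 0 := by
        have h5 := key j i
        rw [if_neg (Ne.symm hji)] at h5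
        exact abs_eq_zero.mp h5
      simp [h0]
    · simp

private def signMap6 {m : ℕ} (s : Fin m → Bool) : (Fin m → ℤ) ≃+ (Fin m → ℤ) where
  toFun v := fun i => if s i then v i else -v i
  invFun v := fun i => if s i then v i else -v i
  left_inv v := by funext i; by_cases h : s i <;> simp [h]
  right_inv v := by funext i; by_cases h : s i <;> simp [h]
  map_add' u v := by funext i; by_cases h : s i <;> simp [h] <;> ring

/-- The group of additive bijections of `ℤ^m` preserving the weighted ℓ¹ norm
`Σ_i a i * |· i|` (with positive weights linearly independent over `ℚ`)
consists exactly of the sign-change maps `e_j ↦ ε_j • e_j`, `ε_j = ±1`, and is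
finite of order exactly `2^m`. -/
theorem stmt_6 (m : ℕ) (hm : 0 < m) (a : Fin m → ℝ)
    (hpos : ∀ i, 0 < a i) (hli : LinearIndependent ℚ a) :
    (∀ f : (Fin m → ℤ) ≃+ (Fin m → ℤ),
      (∀ v : Fin m → ℤ,
          ∑ i, a i * |((f v) i : ℝ)| = ∑ i, a i * |(v i : ℝ)|) ↔
        ∃ ε : Fin m → ℤ, (∀ i, ε i = 1 ∨ ε i = -1) ∧
          ∀ j, f (Pi.single j 1) = ε j • Pi.single j 1) ∧
      Nat.card {f : (Fin m → ℤ) ≃+ (Fin m → ℤ) //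
        ∀ v : Fin m → ℤ,
          ∑ i, a i * |((f v) i : ℝ)| = ∑ i, a i * |(v i : ℝ)|} = 2 ^ m := by
  have back : ∀ (f : (Fin m → ℤ) ≃+ (Fin m → ℤ)) (ε : Fin m → ℤ),
      (∀ i, ε i = 1 ∨ ε i = -1) →
      (∀ j, f (Pi.single j 1) = ε j • Pi.single j 1) →
      ∀ v : Fin m → ℤ,
        ∑ i, a i * |((f v) i : ℝ)| = ∑ i, a i * |(v i : ℝ)| := by
    intro f ε hε hb v
    have hfv : ∀ i, f v i = ε i * v i := by
      intro i
      rw [decomp6 f v]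
      simp only [Finset.sum_apply, Pi.smul_apply, smul_eq_mul]
      rw [Finset.sum_eq_single i]
      · rw [hb i]; simp; ring
      · intro j _ hji
        rw [hb j]
        simp [Pi.single_eq_of_ne (Ne.symm hji)]
      · simp
    refine Finset.sum_congr rfl fun i _ => ?_
    rw [hfv i]
    push_cast
    rw [abs_mul]
    rcases hε i with h | h <;> rw [h] <;> simp
  constructor
  · intro f
    constructor
    · intro hf
      obtain ⟨ε, hε, hfe⟩ := eval6 a hli f hf
      refine ⟨ε, hε, fun j => ?_⟩
      funext i
      rw [hfe (Pi.single j 1) i]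
      by_cases h : i = j
      · subst h; simp
      · simp [Pi.single_eq_of_ne h]
    · rintro ⟨ε, hε, hb⟩
      exact back f ε hε hb
  · have e : {f : (Fin m → ℤ) ≃+ (Fin m → ℤ) //
        ∀ v : Fin m → ℤ,
          ∑ i, a i * |((f v) i : ℝ)| = ∑ i, a i * |(v i : ℝ)|} ≃ (Fin m → Bool) := by
      refine ⟨fun f => fun j => decide (f.1 (Pi.single j 1) j = 1),
        fun s => ⟨signMap6 s, ?_⟩, ?_, ?_⟩
      · refine back (signMap6 s) (fun i => if s i then 1 else -1)
          (fun i => by by_cases h : s i <;> simp [h]) (fun j => ?_)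
        funext i
        by_cases h : s i <;> by_cases hij : i = j <;>
          simp [signMap6, h, hij, Pi.single_eq_of_ne]
      · rintro ⟨f, hf⟩
        obtain ⟨ε, hε, hfe⟩ := eval6 a hli f hf
        have hεj : ∀ j, f (Pi.single j 1) j = ε j := by
          intro j; rw [hfe]; simp
        apply Subtype.ext
        apply AddEquiv.ext
        intro v
        funext i
        simp only [signMap6, AddEquiv.coe_mk, Equiv.coe_fn_mk]
        simp only [hεj]
        rw [hfe v i]
        rcases hε i with h | h <;> simp [h] <;> ring
      · intro s
        funext j
        by_cases h : s j <;> simp [signMap6, h]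
    rw [Nat.card_congr e]
    simp [Nat.card_eq_fintype_card]
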